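/- Suppose ε_ℓ := ε(T'_ℓ) satisfies ε_ℓ = e^{(A−LC)(T'_ℓ − T'_{ℓ−1})} ε_{ℓ−1} + 𝒥'_ℓ, that ‖e^{(A−LC)t}‖ ≤ γ e^{−μt} for all t ≥ 0, and that ‖𝒥'_ℓ‖ ≤ γ̃ e^{−μ T'_ℓ}/2^ℓ for every ℓ ≥ 1. Then ‖ε(T'_ℓ)‖ ≤ γ(‖ε(0)‖ + γ̃) e^{−μ T'_ℓ} for all ℓ ≥ 0. -/

import Mathlib

open NormedSpace

set_option maxHeartbeats 1000000 in
theorem variable_window_rate_preserved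
    (m : ℕ)
    (ALC : EuclideanSpace ℝ (Fin m) →L[ℝ] EuclideanSpace ℝ (Fin m))
    (T' : ℕ → ℝ) (hT0 : T' 0 = 0) (hTmono : StrictMono T')
    (μ γ γt : ℝ) (hμ : 0 < μ) (hγ : 1 ≤ γ) (hγt : 0 < γt)
    (ε J : ℕ → EuclideanSpace ℝ (Fin m))
    (hrec : ∀ ℓ : ℕ, 1 ≤ ℓ →
      ε ℓ = exp ((T' ℓ - T' (ℓ - 1)) • ALC) (ε (ℓ - 1)) + J ℓ)
    (hnorm : ∀ t : ℝ, 0 ≤ t → ‖exp (t • ALC)‖ ≤ γ * Real.exp (-μ * t))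
    (hJ : ∀ ℓ : ℕ, 1 ≤ ℓ → ‖J ℓ‖ ≤ γt * Real.exp (-μ * T' ℓ) / 2 ^ ℓ) :
    ∀ ℓ : ℕ, ‖ε ℓ‖ ≤ γ * (‖ε 0‖ + γt) * Real.exp (-μ * T' ℓ) := by
  have hγ0 : 0 < γ := lt_of_lt_of_le one_pos hγ
  -- exp of zero times ALC is the identity
  have hexp0 : ∀ x : EuclideanSpace ℝ (Fin m), exp ((0:ℝ) • ALC) x = x := by
    intro x
    have h : (0:ℝ) • ALC = 0 := zero_smul ℝ ALC
    rw [h, exp_zero]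
    rfl
  -- composing exponentials
  have key : ∀ a b : ℝ, ∀ x : EuclideanSpace ℝ (Fin m),
      exp (a • ALC) (exp (b • ALC) x) = exp ((a + b) • ALC) x := by
    intro a b x
    have hc : Commute (a • ALC) (b • ALC) := by
      show (a • ALC) * (b • ALC) = (b • ALC) * (a • ALC)
      ext y
      simp [ContinuousLinearMap.mul_apply, smul_smul, mul_comm]
    have h1 : (a + b) • ALC = a • ALC + b • ALC := add_smul a b ALC
    rw [h1, exp_add_of_commute_of_mem_ball (𝕂 := ℝ) hc ((expSeries_radius_eq_top ℝ (EuclideanSpace ℝ (Fin m) →L[ℝ] EuclideanSpace ℝ (Fin m))).symm ▸ edist_lt_top _ _)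
      ((expSeries_radius_eq_top ℝ (EuclideanSpace ℝ (Fin m) →L[ℝ] EuclideanSpace ℝ (Fin m))).symm ▸ edist_lt_top _ _)]
    rfl
  -- closed form
  have hcf : ∀ ℓ : ℕ, ε ℓ = exp (T' ℓ • ALC) (ε 0) +
      ∑ k ∈ Finset.Icc 1 ℓ, exp ((T' ℓ - T' k) • ALC) (J k) := by
    intro ℓ
    induction ℓ with
    | zero =>
        rw [hT0]
        rw [hexp0 (ε 0)]
        simp
    | succ n ih =>
        have h1 : ε (n + 1) = exp ((T' (n+1) - T' n) • ALC) (ε n) + J (n+1) := by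
          simpa using hrec (n+1) (by omega)
        rw [h1, ih, map_add, map_sum, key]
        have h2 : T' (n+1) - T' n + T' n = T' (n+1) := by ring
        rw [h2]
        have h3 : ∀ k ∈ Finset.Icc 1 n,
            exp ((T' (n+1) - T' n) • ALC) (exp ((T' n - T' k) • ALC) (J k))
              = exp ((T' (n+1) - T' k) • ALC) (J k) := by
          intro k _
          rw [key]
          ring_nf
        rw [Finset.sum_congr rfl h3,
          Finset.sum_Icc_succ_top (by omega : 1 ≤ n+1)]
        have h4 : (T' (n+1) - T' (n+1)) • ALC = (0:ℝ) • ALC := by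
          rw [sub_self]
        rw [h4, hexp0 (J (n+1))]
        abel
  -- geometric sum
  have hgeom : ∀ ℓ : ℕ, ∑ k ∈ Finset.Icc 1 ℓ, ((1:ℝ)/2) ^ k ≤ 1 := by
    intro ℓ
    have h : ∑ k ∈ Finset.Icc 1 ℓ, ((1:ℝ)/2) ^ k = 1 - (1/2)^ℓ := by
      induction ℓ with
      | zero => simp
      | succ n ih =>
          rw [Finset.sum_Icc_succ_top (by omega : 1 ≤ n+1), ih]
          ring
    rw [h]
    have : (0:ℝ) ≤ (1/2)^ℓ := by positivity
    linarith
  intro ℓ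
  have hT0le : ∀ k, 0 ≤ T' k := by
    intro k
    rw [← hT0]
    exact hTmono.monotone (Nat.zero_le k)
  rw [hcf ℓ]
  calc ‖exp (T' ℓ • ALC) (ε 0) + ∑ k ∈ Finset.Icc 1 ℓ, exp ((T' ℓ - T' k) • ALC) (J k)‖
      ≤ ‖exp (T' ℓ • ALC) (ε 0)‖ + ∑ k ∈ Finset.Icc 1 ℓ, ‖exp ((T' ℓ - T' k) • ALC) (J k)‖ :=
        (norm_add_le _ _).trans (by gcongr; exact norm_sum_le _ _)
    _ ≤ γ * Real.exp (-μ * T' ℓ) * ‖ε 0‖ +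
        ∑ k ∈ Finset.Icc 1 ℓ, γ * γt * Real.exp (-μ * T' ℓ) * (1/2)^k := by
        gcongr ?_ + ∑ k ∈ _, ?_ with k hk
        · calc ‖exp (T' ℓ • ALC) (ε 0)‖ ≤ ‖exp (T' ℓ • ALC)‖ * ‖ε 0‖ :=
                ContinuousLinearMap.le_opNorm _ _
            _ ≤ γ * Real.exp (-μ * T' ℓ) * ‖ε 0‖ := by
                gcongr
                exact hnorm _ (hT0le ℓ)
        · simp only [Finset.mem_Icc] at hk
          have hkl : T' k ≤ T' ℓ := hTmono.monotone hk.2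
          have h5 : Real.exp (-μ * (T' ℓ - T' k)) * Real.exp (-μ * T' k)
              = Real.exp (-μ * T' ℓ) := by
            rw [← Real.exp_add]; ring_nf
          calc ‖exp ((T' ℓ - T' k) • ALC) (J k)‖
              ≤ ‖exp ((T' ℓ - T' k) • ALC)‖ * ‖J k‖ := ContinuousLinearMap.le_opNorm _ _
            _ ≤ (γ * Real.exp (-μ * (T' ℓ - T' k))) * (γt * Real.exp (-μ * T' k) / 2 ^ k) :=
                mul_le_mul (hnorm _ (by linarith)) (hJ k hk.1) (norm_nonneg _) (by positivity)
            _ = γ * γt * Real.exp (-μ * T' ℓ) * (1/2)^k := by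
                rw [div_pow, one_pow]
                linear_combination (γ * γt / 2 ^ k) * h5
    _ = γ * Real.exp (-μ * T' ℓ) * ‖ε 0‖ +
        γ * γt * Real.exp (-μ * T' ℓ) * ∑ k ∈ Finset.Icc 1 ℓ, ((1:ℝ)/2)^k := by
        rw [Finset.mul_sum]
    _ ≤ γ * Real.exp (-μ * T' ℓ) * ‖ε 0‖ + γ * γt * Real.exp (-μ * T' ℓ) * 1 := by
        have he : 0 < Real.exp (-μ * T' ℓ) := Real.exp_pos _
        have hc : 0 ≤ γ * γt * Real.exp (-μ * T' ℓ) := by positivity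
        nlinarith [hgeom ℓ]
    _ = γ * (‖ε 0‖ + γt) * Real.exp (-μ * T' ℓ) := by ring
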